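/- arXiv:2102.02881 — 5 statements merged into one kernel-verified Lean document; each statement's English description precedes it below -/
import Mathlib

section
/- If a set of assumptions Δ is conflict-free in every agent's Bipolar ABA framework, then Δ is conflict-free in the aggregated framework obtained by any oligarchic rule (intersection of the rule sets of a nonempty set of veto agents). -/
/-- A Bipolar ABA rule `head ← body` (body is a single assumption). -/
structure ABARule (S : Type) where
  head : S
  body : S

/-- `Derives R a b`: there is a deduction (chain of rules in `R`) from `a` to `b`. -/
def Derives {S : Type} (R : Set (ABARule S)) : S → S → Prop :=
  Relation.ReflTransGen fun a b => (⟨b, a⟩ : ABARule S) ∈ R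

/-- `Δ` attacks `β` iff the contrary of `β` is deducible from some member of `Δ`. -/
def Attacks {S : Type} (co : S → S) (R : Set (ABARule S)) (Delta : Set S) (b : S) : Prop :=
  ∃ a ∈ Delta, Derives R a (co b)

/-- `Δ` attacks set `B` iff it attacks some member of `B`. -/
def AttacksSet {S : Type} (co : S → S) (R : Set (ABARule S)) (Delta B : Set S) : Prop :=
  ∃ b ∈ B, Attacks co R Delta b

/-- `Δ` is conflict-free iff it does not attack itself. -/
def ConflictFree {S : Type} (co : S → S) (R : Set (ABARule S)) (Delta : Set S) : Prop :=
  ¬ AttacksSet co R Delta Delta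

/-- Deductive closure of `Δ` within the assumptions `asm`. -/
def Cl {S : Type} (asm : Set S) (R : Set (ABARule S)) (Delta : Set S) : Set S :=
  {a | a ∈ asm ∧ ∃ d ∈ Delta, Derives R d a}

/-- `Δ` is closed iff `Δ = Cl(Δ)`. -/
def BABAClosed {S : Type} (asm : Set S) (R : Set (ABARule S)) (Delta : Set S) : Prop :=
  Cl asm R Delta = Delta

/-- Admissibility: closed, conflict-free, and counter-attacks every closed attacker. -/
def Admissible {S : Type} (asm : Set S) (co : S → S) (R : Set (ABARule S))
    (Delta : Set S) : Prop :=
  Delta ⊆ asm ∧ BABAClosed asm R Delta ∧ ConflictFree co R Delta ∧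
    ∀ B ⊆ asm, BABAClosed asm R B → AttacksSet co R B Delta → AttacksSet co R Delta B

/-- Preferred: ⊆-maximally admissible. -/
def Preferred {S : Type} (asm : Set S) (co : S → S) (R : Set (ABARule S))
    (Delta : Set S) : Prop :=
  Admissible asm co R Delta ∧
    ∀ D', Admissible asm co R D' → Delta ⊆ D' → D' = Delta

/-- `Δ` defends `α` iff `Δ` attacks every closed set attacking `α`. -/
def Defends {S : Type} (asm : Set S) (co : S → S) (R : Set (ABARule S))
    (Delta : Set S) (a : S) : Prop :=
  ∀ B ⊆ asm, BABAClosed asm R B → Attacks co R B a → AttacksSet co R Delta B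

/-- Complete: admissible and containing exactly the assumptions it defends. -/
def CompleteExt {S : Type} (asm : Set S) (co : S → S) (R : Set (ABARule S))
    (Delta : Set S) : Prop :=
  Admissible asm co R Delta ∧ Delta = {a | a ∈ asm ∧ Defends asm co R Delta a}

/-- Set-stable: closed, conflict-free, attacking `Cl({β})` for every `β` outside. -/
def SetStable {S : Type} (asm : Set S) (co : S → S) (R : Set (ABARule S))
    (Delta : Set S) : Prop :=
  Delta ⊆ asm ∧ BABAClosed asm R Delta ∧ ConflictFree co R Delta ∧
    ∀ b ∈ asm, b ∉ Delta → AttacksSet co R Delta (Cl asm R {b})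

/-- Well-founded extension: the intersection of all complete extensions. -/
def WellFoundedExt {S : Type} (asm : Set S) (co : S → S) (R : Set (ABARule S))
    (Delta : Set S) : Prop :=
  Delta = ⋂₀ {B | CompleteExt asm co R B}

/-- Ideal: ⊆-maximal among admissible sets contained in all preferred extensions. -/
def IdealExt {S : Type} (asm : Set S) (co : S → S) (R : Set (ABARule S))
    (Delta : Set S) : Prop :=
  (Admissible asm co R Delta ∧ ∀ B, Preferred asm co R B → Delta ⊆ B) ∧
    ∀ D', (Admissible asm co R D' ∧ ∀ B, Preferred asm co R B → D' ⊆ B) →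
      Delta ⊆ D' → D' = Delta

/-- Quota rule: keep the rules accepted by at least `q` agents. -/
def QuotaAgg {S : Type} {n : ℕ} (Rs : Fin n → Set (ABARule S)) (q : ℕ) :
    Set (ABARule S) :=
  {r | ∃ N' : Finset (Fin n), q ≤ N'.card ∧ ∀ i ∈ N', r ∈ Rs i}

/-- Oligarchic rule: keep the rules accepted by all veto agents. -/
def OligAgg {S : Type} {n : ℕ} (Rs : Fin n → Set (ABARule S)) (Nv : Set (Fin n)) :
    Set (ABARule S) :=
  {r | ∀ j ∈ Nv, r ∈ Rs j}

theorem olig_preserves_conflictFree {S : Type} (asm : Set S) (co : S → S)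
    {n : ℕ} (hn : 1 < n) (Rs : Fin n → Set (ABARule S))
    (Nv : Set (Fin n)) (hNv : Nv.Nonempty)
    (Delta : Set S) (hD : Delta ⊆ asm)
    (h : ∀ i, ConflictFree co (Rs i) Delta) :
    ConflictFree co (OligAgg Rs Nv) Delta := by
  obtain ⟨j, hj⟩ := hNv
  intro ⟨b, hb, a, ha, hder⟩
  exact h j ⟨b, hb, a, ha, Relation.ReflTransGen.mono (r := fun a b => (⟨b, a⟩ : ABARule S) ∈ OligAgg Rs Nv) (p := fun a b => (⟨b, a⟩ : ABARule S) ∈ Rs j) (by intro x y hxy; exact hxy j hj) a (co b) hder⟩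
end

section
/- For |A| ≥ 4 assumptions and n ≥ 2 agents, every quota rule with quota q > 1 fails to preserve admissibility: there exists a profile of agents' Bipolar ABA frameworks and a set Δ admissible in each agent's framework such that Δ is not admissible in the framework aggregated by the quota rule with quota q. (Witness: N−q agents with empty rule set, q−1 agents with rules {contrary(D) ← B, contrary(C) ← D}, one agent with rules {contrary(D) ← A, contrary(C) ← D, A ← B}, and Δ = {A,B,C}.) -/
namespace QuotaCounterexample

def asm0 : Set ℕ := {0, 1, 2, 3}
def co0 : ℕ → ℕ := fun x => x + 4
def Delta0 : Set ℕ := {0, 1, 2}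
def R1 : Set (ABARule ℕ) := {⟨7, 1⟩, ⟨6, 3⟩}
def R2 : Set (ABARule ℕ) := {⟨7, 0⟩, ⟨0, 1⟩, ⟨6, 3⟩}
def Rg : Set (ABARule ℕ) := {⟨6, 3⟩}

lemma derE {x y : ℕ} (h : Derives (∅ : Set (ABARule ℕ)) x y) : y = x := by
  induction h with
  | refl => rfl
  | tail _ hstep _ => exact absurd hstep (Set.notMem_empty _)

lemma derG {x y : ℕ} (h : Derives Rg x y) : y = x ∨ (x = 3 ∧ y = 6) := by
  induction h with
  | refl => left; rfl
  | tail _ hstep ih =>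
    simp only [Rg, Set.mem_singleton_iff, ABARule.mk.injEq] at hstep
    omega

lemma der1 {x y : ℕ} (h : Derives R1 x y) :
    y = x ∨ (x = 1 ∧ y = 7) ∨ (x = 3 ∧ y = 6) := by
  induction h with
  | refl => left; rfl
  | tail _ hstep ih =>
    simp only [R1, Set.mem_insert_iff, Set.mem_singleton_iff, ABARule.mk.injEq] at hstep
    omega

lemma der2 {x y : ℕ} (h : Derives R2 x y) :
    y = x ∨ (x = 0 ∧ y = 7) ∨ (x = 1 ∧ (y = 0 ∨ y = 7)) ∨ (x = 3 ∧ y = 6) := by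
  induction h with
  | refl => left; rfl
  | tail _ hstep ih =>
    simp only [R2, Set.mem_insert_iff, Set.mem_singleton_iff, ABARule.mk.injEq] at hstep
    omega

lemma delta_sub : Delta0 ⊆ asm0 := by
  intro x hx
  simp only [Delta0, Set.mem_insert_iff, Set.mem_singleton_iff] at hx
  simp only [asm0, Set.mem_insert_iff, Set.mem_singleton_iff]
  omega

lemma admE : Admissible asm0 co0 (∅ : Set (ABARule ℕ)) Delta0 := by
  refine ⟨delta_sub, ?_, ?_, ?_⟩
  · ext a
    simp only [Cl, Set.mem_setOf_eq]
    constructor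
    · rintro ⟨_, d, hd, hder⟩; rw [derE hder]; exact hd
    · intro ha; exact ⟨delta_sub ha, a, ha, Relation.ReflTransGen.refl⟩
  · rintro ⟨b, hb, a, ha, hder⟩
    have := derE hder
    simp only [Delta0, Set.mem_insert_iff, Set.mem_singleton_iff] at hb ha
    simp only [co0] at this; omega
  · rintro B hB _ ⟨b, hb, x, hx, hder⟩
    have := derE hder
    have hxa := hB hx
    simp only [asm0, Set.mem_insert_iff, Set.mem_singleton_iff] at hxa
    simp only [Delta0, Set.mem_insert_iff, Set.mem_singleton_iff] at hb
    simp only [co0] at this; omega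

lemma adm1 : Admissible asm0 co0 R1 Delta0 := by
  refine ⟨delta_sub, ?_, ?_, ?_⟩
  · ext a
    simp only [Cl, Set.mem_setOf_eq]
    constructor
    · rintro ⟨ha, d, hd, hder⟩
      have h := der1 hder
      simp only [asm0, Set.mem_insert_iff, Set.mem_singleton_iff] at ha
      simp only [Delta0, Set.mem_insert_iff, Set.mem_singleton_iff] at hd ⊢
      omega
    · intro ha; exact ⟨delta_sub ha, a, ha, Relation.ReflTransGen.refl⟩
  · rintro ⟨b, hb, a, ha, hder⟩
    have := der1 hder
    simp only [Delta0, Set.mem_insert_iff, Set.mem_singleton_iff] at hb ha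
    simp only [co0] at this; omega
  · rintro B hB _ ⟨b, hb, x, hx, hder⟩
    have h := der1 hder
    have hxa := hB hx
    simp only [asm0, Set.mem_insert_iff, Set.mem_singleton_iff] at hxa
    simp only [Delta0, Set.mem_insert_iff, Set.mem_singleton_iff] at hb
    simp only [co0] at h
    have hx3 : x = 3 := by omega
    subst hx3
    refine ⟨3, hx, 1, by simp [Delta0], Relation.ReflTransGen.single ?_⟩
    show (⟨7, 1⟩ : ABARule ℕ) ∈ R1
    simp [R1, co0]

lemma adm2 : Admissible asm0 co0 R2 Delta0 := by
  refine ⟨delta_sub, ?_, ?_, ?_⟩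
  · ext a
    simp only [Cl, Set.mem_setOf_eq]
    constructor
    · rintro ⟨ha, d, hd, hder⟩
      have h := der2 hder
      simp only [asm0, Set.mem_insert_iff, Set.mem_singleton_iff] at ha
      simp only [Delta0, Set.mem_insert_iff, Set.mem_singleton_iff] at hd ⊢
      omega
    · intro ha; exact ⟨delta_sub ha, a, ha, Relation.ReflTransGen.refl⟩
  · rintro ⟨b, hb, a, ha, hder⟩
    have := der2 hder
    simp only [Delta0, Set.mem_insert_iff, Set.mem_singleton_iff] at hb ha
    simp only [co0] at this; omega
  · rintro B hB _ ⟨b, hb, x, hx, hder⟩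
    have h := der2 hder
    have hxa := hB hx
    simp only [asm0, Set.mem_insert_iff, Set.mem_singleton_iff] at hxa
    simp only [Delta0, Set.mem_insert_iff, Set.mem_singleton_iff] at hb
    simp only [co0] at h
    have hx3 : x = 3 := by omega
    subst hx3
    refine ⟨3, hx, 0, by simp [Delta0], Relation.ReflTransGen.single ?_⟩
    show (⟨7, 0⟩ : ABARule ℕ) ∈ R2
    simp [R2, co0]


lemma agg_eq {n : ℕ} (q : ℕ) (hq : 1 < q) (hqn : q ≤ n)
    (Rs : Fin n → Set (ABARule ℕ))
    (hRs : ∀ i : Fin n, Rs i = if i.val = 0 then R2 else if i.val < q then R1 else ∅) :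
    QuotaAgg Rs q = Rg := by
  ext r
  constructor
  · rintro ⟨N', hcard, hall⟩
    obtain ⟨i, hi, j, hj, hij⟩ := Finset.one_lt_card.mp (lt_of_lt_of_le hq hcard)
    obtain ⟨k, hk, hk0⟩ : ∃ k ∈ N', (k : Fin n).val ≠ 0 := by
      by_cases h0 : i.val = 0
      · exact ⟨j, hj, fun hj0 => hij (Fin.val_injective (h0.trans hj0.symm))⟩
      · exact ⟨i, hi, h0⟩
    have hrk := hall k hk
    rw [hRs k, if_neg hk0] at hrk
    have hr1 : r ∈ R1 := by
      by_cases hkq : k.val < q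
      · rwa [if_pos hkq] at hrk
      · rw [if_neg hkq] at hrk; exact absurd hrk (Set.notMem_empty _)
    rcases hr1 with hr | hr
    · exfalso
      subst hr
      have hsub : ∀ i ∈ N', i.val ∈ Finset.Ico 1 q := by
        intro i hi
        have h := hall i hi
        rw [hRs i] at h
        split at h
        · simp [R2, ABARule.mk.injEq] at h
        · split at h
          · simp only [Finset.mem_Ico]
            omega
          · exact absurd h (Set.notMem_empty _)
      have hle : N'.card ≤ (Finset.Ico 1 q).card :=
        Finset.card_le_card_of_injOn Fin.val hsub
          (fun a _ b _ h => Fin.val_injective h)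
      rw [Nat.card_Ico] at hle
      omega
    · exact hr
  · intro hr
    rw [Rg, Set.mem_singleton_iff] at hr
    subst hr
    refine ⟨(Finset.range q).attachFin
      (fun m hm => lt_of_lt_of_le (Finset.mem_range.mp hm) hqn), ?_, ?_⟩
    · rw [Finset.card_attachFin, Finset.card_range]
    · intro i hi
      rw [Finset.mem_attachFin, Finset.mem_range] at hi
      by_cases h0 : i.val = 0
      · rw [hRs i, if_pos h0]; simp [R2]
      · rw [hRs i, if_neg h0, if_pos hi]; simp [R1]

lemma main (n q : ℕ) (hn : 2 ≤ n) (hq : 1 < q) (hqn : q ≤ n) :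
    ∃ (S : Type) (asm : Set S) (co : S → S) (a b c d : S),
      a ∈ asm ∧ b ∈ asm ∧ c ∈ asm ∧ d ∈ asm ∧
      a ≠ b ∧ a ≠ c ∧ a ≠ d ∧ b ≠ c ∧ b ≠ d ∧ c ≠ d ∧
      ∃ (Rs : Fin n → Set (ABARule S)) (Delta : Set S),
        (∀ i, Admissible asm co (Rs i) Delta) ∧
        ¬ Admissible asm co (QuotaAgg Rs q) Delta := by
  refine ⟨ℕ, asm0, co0, 0, 1, 2, 3, by simp [asm0], by simp [asm0], by simp [asm0],
    by simp [asm0], by omega, by omega, by omega, by omega, by omega, by omega,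
    fun i => if i.val = 0 then R2 else if i.val < q then R1 else ∅, Delta0, ?_, ?_⟩
  · intro i
    dsimp only
    by_cases h0 : i.val = 0
    · rw [if_pos h0]; exact adm2
    · rw [if_neg h0]
      by_cases hiq : i.val < q
      · rw [if_pos hiq]; exact adm1
      · rw [if_neg hiq]; exact admE
  · rw [agg_eq q hq hqn _ (fun i => rfl)]
    rintro ⟨_, _, _, hdef⟩
    have hB : ({3} : Set ℕ) ⊆ asm0 := by
      intro x hx
      simp only [Set.mem_singleton_iff] at hx
      simp [asm0, hx]
    have hBc : BABAClosed asm0 Rg {3} := by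
      ext a
      simp only [Cl, Set.mem_setOf_eq, Set.mem_singleton_iff]
      constructor
      · rintro ⟨ha, d, hd, hder⟩
        subst hd
        have := derG hder
        simp only [asm0, Set.mem_insert_iff, Set.mem_singleton_iff] at ha
        omega
      · intro ha
        subst ha
        exact ⟨by simp [asm0], 3, rfl, Relation.ReflTransGen.refl⟩
    have hatt : AttacksSet co0 Rg {3} Delta0 := by
      refine ⟨2, by simp [Delta0], 3, rfl, Relation.ReflTransGen.single ?_⟩
      show (⟨co0 2, 3⟩ : ABARule ℕ) ∈ Rg
      rfl
    obtain ⟨b, hb, a, ha, hder⟩ := hdef {3} hB hBc hatt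
    simp only [Set.mem_singleton_iff] at hb
    subst hb
    have h := derG hder
    simp only [Delta0, Set.mem_insert_iff, Set.mem_singleton_iff] at ha
    simp only [co0] at h
    omega

end QuotaCounterexample

theorem quota_gt_one_fails_admissibility (n q : ℕ) (hn : 2 ≤ n)
    (hq : 1 < q) (hqn : q ≤ n) :
    ∃ (S : Type) (asm : Set S) (co : S → S) (a b c d : S),
      a ∈ asm ∧ b ∈ asm ∧ c ∈ asm ∧ d ∈ asm ∧
      a ≠ b ∧ a ≠ c ∧ a ≠ d ∧ b ≠ c ∧ b ≠ d ∧ c ≠ d ∧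
      ∃ (Rs : Fin n → Set (ABARule S)) (Delta : Set S),
        (∀ i, Admissible asm co (Rs i) Delta) ∧
        ¬ Admissible asm co (QuotaAgg Rs q) Delta := by
  exact QuotaCounterexample.main n q hn hq hqn
end

section
/- Quota rules with quota q > 1 do not preserve set-stable extensions: with three agents whose rule sets are R_1 = {contrary(D) ← B, B ← A}, R_2 = {contrary(D) ← C}, R_3 = {contrary(D) ← A, contrary(C) ← D, A ← B} over assumptions {A,B,C,D}, the set {A,B,C} is set-stable in each agent's framework, but the aggregated rule set under any quota q > 1 is empty and {A,B,C} is not set-stable in the aggregated framework. -/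
abbrev Sen4 := Fin 4 ⊕ Fin 4

def cmap4 : Sen4 → Sen4
  | .inl i => .inr i
  | .inr i => .inr i

def asm4 : Set Sen4 := Set.range Sum.inl

def R7a : Set (ABARule Sen4) := {⟨.inr 3, .inl 1⟩, ⟨.inl 1, .inl 0⟩}

def R7b : Set (ABARule Sen4) := {⟨.inr 3, .inl 2⟩}

def R7c : Set (ABARule Sen4) := {⟨.inr 3, .inl 0⟩, ⟨.inr 2, .inl 3⟩, ⟨.inl 0, .inl 1⟩}

def Rs7 : Fin 3 → Set (ABARule Sen4) := ![R7a, R7b, R7c]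

def D7 : Set Sen4 := {.inl 0, .inl 1, .inl 2}


lemma derives_closed {R : Set (ABARule Sen4)} {P : Sen4 → Prop} {a b : Sen4}
    (h : Derives R a b) (ha : P a)
    (hstep : ∀ x y, P x → (⟨y, x⟩ : ABARule Sen4) ∈ R → P y) : P b := by
  induction h with
  | refl => exact ha
  | tail _ hs ih => exact hstep _ _ ih hs

lemma derives_empty {a b : Sen4} (h : Derives (∅ : Set (ABARule Sen4)) a b) : a = b := by
  induction h with
  | refl => rfl
  | tail _ hs ih => exact absurd hs (Set.notMem_empty _)

def Big : Set Sen4 := {.inl 0, .inl 1, .inl 2, .inr 3}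

lemma big_a {a b : Sen4} (ha : a ∈ Big) (h : Derives R7a a b) : b ∈ Big := by
  refine derives_closed h ha ?_
  intro x y hx hy
  simp only [R7a, Set.mem_insert_iff, Set.mem_singleton_iff, ABARule.mk.injEq] at hy
  rcases hy with ⟨rfl, rfl⟩ | ⟨rfl, rfl⟩ <;> simp [Big]

lemma big_b {a b : Sen4} (ha : a ∈ Big) (h : Derives R7b a b) : b ∈ Big := by
  refine derives_closed h ha ?_
  intro x y hx hy
  simp only [R7b, Set.mem_singleton_iff, ABARule.mk.injEq] at hy
  rcases hy with ⟨rfl, rfl⟩; simp [Big]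

lemma big_c {a b : Sen4} (ha : a ∈ Big) (h : Derives R7c a b) : b ∈ Big := by
  refine derives_closed h ha ?_
  intro x y hx hy
  simp only [R7c, Set.mem_insert_iff, Set.mem_singleton_iff, ABARule.mk.injEq] at hy
  rcases hy with ⟨rfl, rfl⟩ | ⟨rfl, rfl⟩ | ⟨rfl, rfl⟩
  · simp [Big]
  · simp [Big] at hx
  · simp [Big]

lemma setstable_of_big {R : Set (ABARule Sen4)}
    (hbig : ∀ {a b : Sen4}, a ∈ Big → Derives R a b → b ∈ Big)
    (hatt : ∃ a ∈ D7, Derives R a (.inr 3)) :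
    SetStable asm4 cmap4 R D7 := by
  have hsub : D7 ⊆ asm4 := by
    rintro a (rfl | rfl | rfl) <;> exact ⟨_, rfl⟩
  have hD7big : ∀ a ∈ D7, a ∈ Big := by
    rintro a (rfl | rfl | rfl) <;> simp [Big]
  refine ⟨hsub, ?_, ?_, ?_⟩
  · ext a
    constructor
    · rintro ⟨⟨k, rfl⟩, d, hd, hder⟩
      have hb := hbig (hD7big d hd) hder
      simp only [Big, Set.mem_insert_iff, Set.mem_singleton_iff] at hb
      rcases hb with h | h | h | h <;> simp_all [D7]
    · intro ha
      exact ⟨hsub ha, a, ha, Relation.ReflTransGen.refl⟩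
  · rintro ⟨b, hb, a, ha, hder⟩
    have hb2 := hbig (hD7big a ha) hder
    rcases hb with rfl | rfl | rfl <;>
      simp only [cmap4, Big, Set.mem_insert_iff, Set.mem_singleton_iff] at hb2 <;>
      rcases hb2 with h | h | h | h <;> simp_all
  · rintro b ⟨k, rfl⟩ hnot
    have hk : k = 3 := by
      fin_cases k <;> simp_all [D7]
    subst hk
    obtain ⟨a, ha, hder⟩ := hatt
    exact ⟨.inl 3, ⟨⟨3, rfl⟩, .inl 3, rfl, Relation.ReflTransGen.refl⟩, a, ha, hder⟩

theorem quota_gt_one_fails_setStable :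
    (∀ i, SetStable asm4 cmap4 (Rs7 i) D7) ∧
    ∀ q, 1 < q → q ≤ 3 →
      QuotaAgg Rs7 q = ∅ ∧ ¬ SetStable asm4 cmap4 (QuotaAgg Rs7 q) D7 := by
  constructor
  · intro i
    fin_cases i
    · refine setstable_of_big (fun ha h => big_a ha h) ⟨.inl 1, Or.inr (Or.inl rfl), ?_⟩
      exact Relation.ReflTransGen.single (by simp [R7a, Rs7])
    · refine setstable_of_big (fun ha h => big_b ha h) ⟨.inl 2, Or.inr (Or.inr rfl), ?_⟩
      exact Relation.ReflTransGen.single (by simp [R7b, Rs7])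
    · refine setstable_of_big (fun ha h => big_c ha h) ⟨.inl 0, Or.inl rfl, ?_⟩
      exact Relation.ReflTransGen.single (by simp [R7c, Rs7])
  · intro q hq1 hq3
    have hempty : QuotaAgg Rs7 q = ∅ := by
      ext r
      simp only [QuotaAgg, Set.mem_setOf_eq, Set.mem_empty_iff_false, iff_false]
      rintro ⟨N', hcard, hall⟩
      obtain ⟨a, ha, b, hb, hab⟩ := Finset.one_lt_card.mp (lt_of_lt_of_le hq1 hcard)
      have hra := hall a ha
      have hrb := hall b hb
      fin_cases a <;> fin_cases b <;> simp_all [Rs7, R7a, R7b, R7c, ABARule.mk.injEq] <;>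
        casesm* _ ∨ _ <;> simp_all
    refine ⟨hempty, ?_⟩
    rw [hempty]
    rintro ⟨_, _, _, h4⟩
    obtain ⟨c, hc, a, ha, hder⟩ := h4 (.inl 3) ⟨3, rfl⟩ (by simp [D7])
    obtain ⟨hcasm, d, hd, hder2⟩ := hc
    rcases hd with rfl
    have hc3 : c = Sum.inl 3 := (derives_empty hder2).symm
    subst hc3
    have := derives_empty hder
    rcases ha with rfl | rfl | rfl <;> simp [cmap4] at this
end

section
/- Non-emptiness of the well-founded extension is k-exclusive for k = |A|: letting S = {contrary(A_{i+1}) ← A_i : 1 ≤ i < k} ∪ {contrary(A_1) ← A_k} over assumptions A_1,…,A_k, the framework whose rule set equals S has an empty well-founded extension, but for every proper subset R ⊂ S the framework with rule set R has a non-empty well-founded extension. -/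
def asmK (k : ℕ) : Set (Fin k ⊕ Fin k) := Set.range Sum.inl

def cmapK (k : ℕ) : (Fin k ⊕ Fin k) → (Fin k ⊕ Fin k)
  | .inl i => .inr i
  | .inr i => .inr i

/-- The cycle of attack rules `contrary(A_{i+1}) ← A_i` (indices mod `k`). -/
def ringRules (k : ℕ) (hk : 2 ≤ k) : Set (ABARule (Fin k ⊕ Fin k)) :=
  {r | ∃ i : Fin k, r = ⟨Sum.inr (i + (⟨1, by omega⟩ : Fin k)), Sum.inl i⟩}


section Aux

lemma derives_inr {k : ℕ} (hk : 2 ≤ k) {R : Set (ABARule (Fin k ⊕ Fin k))}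
    (hR : R ⊆ ringRules k hk) {m : Fin k} {a : Fin k ⊕ Fin k}
    (h : Derives R (Sum.inr m) a) : a = Sum.inr m := by
  rcases Relation.ReflTransGen.cases_head h with h | ⟨c, hc, _⟩
  · exact h.symm
  · rcases hR hc with ⟨i, hi⟩
    injection hi with h1 h2
    simp at h2

lemma derives_inl {k : ℕ} (hk : 2 ≤ k) {R : Set (ABARule (Fin k ⊕ Fin k))}
    (hR : R ⊆ ringRules k hk) {i : Fin k} {a : Fin k ⊕ Fin k}
    (h : Derives R (Sum.inl i) a) :
    a = Sum.inl i ∨ (a = Sum.inr (i + (⟨1, by omega⟩ : Fin k)) ∧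
      (⟨Sum.inr (i + (⟨1, by omega⟩ : Fin k)), Sum.inl i⟩ : ABARule (Fin k ⊕ Fin k)) ∈ R) := by
  rcases Relation.ReflTransGen.cases_head h with h | ⟨c, hc, hrest⟩
  · exact Or.inl h.symm
  · rcases hR hc with ⟨j, hj⟩
    injection hj with h1 h2
    injection h2 with h2
    subst h2
    subst h1
    exact Or.inr ⟨derives_inr hk hR hrest, hc⟩

lemma closed_subset {k : ℕ} (hk : 2 ≤ k) {R : Set (ABARule (Fin k ⊕ Fin k))}
    (hR : R ⊆ ringRules k hk) {D : Set (Fin k ⊕ Fin k)} (hD : D ⊆ asmK k) :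
    BABAClosed (asmK k) R D := by
  apply Set.Subset.antisymm
  · rintro a ⟨ha, d, hd, hder⟩
    rcases hD hd with ⟨i, rfl⟩
    rcases derives_inl hk hR hder with rfl | ⟨rfl, -⟩
    · exact hd
    · rcases ha with ⟨m, hm⟩
      simp at hm
  · intro a ha
    exact ⟨hD ha, a, ha, Relation.ReflTransGen.refl⟩

end Aux

theorem wellFounded_nonempty_kExclusive (k : ℕ) (hk : 2 ≤ k) :
    (⋂₀ {B | CompleteExt (asmK k) (cmapK k) (ringRules k hk) B}) = ∅ ∧
    ∀ R, R ⊂ ringRules k hk →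
      (⋂₀ {B | CompleteExt (asmK k) (cmapK k) R B}) ≠ ∅ := by
  obtain ⟨k', rfl⟩ : ∃ k', k = k' + 1 := ⟨k - 1, by omega⟩
  haveI : NeZero (k' + 1) := ⟨Nat.succ_ne_zero k'⟩
  set o : Fin (k' + 1) := ⟨1, by omega⟩ with ho
  constructor
  · have hcomp : CompleteExt (asmK (k'+1)) (cmapK (k'+1)) (ringRules (k'+1) hk) (∅ : Set _) := by
      constructor
      · refine ⟨Set.empty_subset _, ?_, ?_, ?_⟩
        · apply Set.Subset.antisymm
          · rintro a ⟨-, d, hd, -⟩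
            exact hd.elim
          · exact Set.empty_subset _
        · rintro ⟨b, hb, -⟩
          exact hb
        · rintro B - - ⟨b, hb, -⟩
          exact hb.elim
      · apply Set.Subset.antisymm
        · exact Set.empty_subset _
        · rintro a ⟨ha, hdef⟩
          rcases ha with ⟨m, rfl⟩
          have hrule : (⟨Sum.inr m, Sum.inl (m - o)⟩ : ABARule (Fin (k'+1) ⊕ Fin (k'+1))) ∈
              ringRules (k'+1) hk := ⟨m - o, by rw [sub_add_cancel]⟩
          have hatt : Attacks (cmapK (k'+1)) (ringRules (k'+1) hk) {Sum.inl (m - o)} (Sum.inl m) :=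
            ⟨Sum.inl (m - o), rfl, Relation.ReflTransGen.single hrule⟩
          have hB : ({Sum.inl (m - o)} : Set (Fin (k'+1) ⊕ Fin (k'+1))) ⊆ asmK (k'+1) := by
            rintro x rfl; exact ⟨m - o, rfl⟩
          rcases hdef _ hB (closed_subset hk subset_rfl hB) hatt with ⟨b, -, a, ha, -⟩
          exact ha.elim
    exact Set.eq_empty_of_subset_empty (Set.sInter_subset_of_mem hcomp)
  · intro R hR
    obtain ⟨r, hr1, hr2⟩ := Set.exists_of_ssubset hR
    rcases hr1 with ⟨i0, rfl⟩
    apply Set.Nonempty.ne_empty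
    refine ⟨Sum.inl (i0 + o), ?_⟩
    rw [Set.mem_sInter]
    intro B hB
    rw [hB.2]
    refine ⟨⟨i0 + o, rfl⟩, ?_⟩
    intro C hCsub hCcl hatt
    exfalso
    rcases hatt with ⟨d, hd, hder⟩
    rcases hCsub hd with ⟨j, rfl⟩
    have hcm : cmapK (k'+1) (Sum.inl (i0 + o)) = Sum.inr (i0 + o) := rfl
    rw [hcm] at hder
    rcases derives_inl hk hR.1 hder with h | ⟨h, hrule⟩
    · simp at h
    · injection h with h
      have : j = i0 := by
        have h' : i0 + o = j + o := h
        exact (add_left_injective o h').symm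
      subst this
      exact hr2 hrule
end

section
/- Acyclicity is k-exclusive for k = |A| ≥ 2: with S = {contrary(A_{i+1}) ← A_i : 1 ≤ i < k} ∪ {contrary(A_1) ← A_k}, any framework whose rule set contains S has cyclic attacks, while any framework whose rule set is a proper subset of S is acyclic. -/
/-- The framework contains cyclic attacks: assumptions `α_1,…,α_m` (`m ≥ 2`) with
`contrary(α_i) ← α_{i+1}` for all `i` (cyclically). -/
def HasCycle {S : Type} (asm : Set S) (co : S → S) (R : Set (ABARule S)) : Prop :=
  ∃ (m : ℕ) (f : Fin (m + 2) → S), (∀ i, f i ∈ asm) ∧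
    ∀ i : Fin (m + 2), (⟨co (f i), f (i + 1)⟩ : ABARule S) ∈ R

theorem acyclicity_kExclusive (k : ℕ) (hk : 2 ≤ k) :
    (∀ R : Set (ABARule (Fin k ⊕ Fin k)), ringRules k hk ⊆ R →
      HasCycle (asmK k) (cmapK k) R) ∧
    (∀ R : Set (ABARule (Fin k ⊕ Fin k)), R ⊂ ringRules k hk →
      ¬ HasCycle (asmK k) (cmapK k) R) := by
  haveI : NeZero k := ⟨by omega⟩
  letI : CommRing (Fin k) := Fin.instCommRing k
  have hone : (⟨1, by omega⟩ : Fin k) = 1 := by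
    apply Fin.ext
    rw [Fin.val_one', Nat.mod_eq_of_lt (by omega)]
  have hc : k - 2 + 2 = k := by omega
  constructor
  · intro R hR
    refine ⟨k - 2, fun i => Sum.inl (-(Fin.cast hc i)), fun i => ⟨_, rfl⟩, fun i => ?_⟩
    apply hR
    refine ⟨-(Fin.cast hc i) - 1, ?_⟩
    have hcast : (Fin.cast hc (i+1)) = Fin.cast hc i + 1 := by
      apply Fin.ext
      simp [Fin.add_def, hc]
    simp [cmapK, hcast, hone]
    ring
  · intro R hR hcyc
    obtain ⟨Rss, hne⟩ := hR
    obtain ⟨m, f, hasm, hrule⟩ := hcyc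
    choose g hg using hasm
    have hstep : ∀ i : Fin (m+2), g (i+1) = g i - 1 := by
      intro i
      have h := Rss (hrule i)
      rw [← hg i, ← hg (i+1)] at h
      obtain ⟨j, hj⟩ := h
      simp [cmapK, hone] at hj
      obtain ⟨h1, h2⟩ := hj
      rw [h1, h2]
      ring
    have hval : ∀ n : ℕ, ∀ hn : n < m + 2, g ⟨n, hn⟩ = g 0 - (n : Fin k) := by
      intro n
      induction n with
      | zero => intro hn; simp
      | succ p ih =>
        intro hn
        have hp : p < m + 2 := by omega
        have : (⟨p+1, hn⟩ : Fin (m+2)) = ⟨p, hp⟩ + 1 := by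
          apply Fin.ext
          simp [Fin.add_def, Fin.val_one, Nat.mod_eq_of_lt (show p + 1 < m + 2 from hn)]
        rw [this, hstep, ih hp]
        push_cast
        ring
    -- k ∣ m + 2
    have hwrap : ((m + 2 : ℕ) : Fin k) = 0 := by
      have h1 : (⟨m+1, by omega⟩ : Fin (m+2)) + 1 = 0 := by
        apply Fin.ext
        simp [Fin.add_def]
      have h2 := hstep ⟨m+1, by omega⟩
      rw [h1, hval (m+1) (by omega)] at h2
      have : g 0 - ((m+1 : ℕ) : Fin k) - 1 = g 0 - ((m+2 : ℕ) : Fin k) := by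
        push_cast; ring
      rw [this] at h2
      have := sub_eq_self.mp h2.symm
      -- h2 : g 0 = g 0 - (m+2)
      exact this
    have hdvd : k ∣ m + 2 := by
      rwa [Fin.natCast_eq_zero] at hwrap
    have hk2 : k ≤ m + 2 := Nat.le_of_dvd (by omega) hdvd
    -- missing rule
    rw [Set.not_subset] at hne
    obtain ⟨r, hrin, hrout⟩ := hne
    obtain ⟨i0, rfl⟩ := hrin
    -- find index n with g = i0 + 1
    set n : ℕ := (g 0 - (i0 + 1)).val with hn
    have hnlt : n < m + 2 := by
      have := (g 0 - (i0 + 1)).isLt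
      omega
    have hgi : g ⟨n, hnlt⟩ = i0 + 1 := by
      rw [hval n hnlt, hn, Fin.cast_val_eq_self]
      ring
    have hrr := hrule ⟨n, hnlt⟩
    rw [← hg ⟨n, hnlt⟩, ← hg (⟨n, hnlt⟩ + 1)] at hrr
    rw [hstep, hgi] at hrr
    simp [cmapK] at hrr
    apply hrout
    rw [hone]
    exact hrr
end
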